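/- Let f be a univariate real polynomial of degree 2d that is strictly positive on ℝ. Then the Gram spectrahedron of f, i.e. the set of positive semidefinite real symmetric (d+1)×(d+1) matrices Q with f = Xᵀ Q X where X = (1, x, …, x^d)ᵀ, is a convex set whose affine span has dimension C(d, 2) = d(d−1)/2. -/

import Mathlib

open Polynomial


lemma exists_sos : ∀ (k : ℕ) (f : Polynomial ℝ), f.natDegree ≤ k → (∀ x : ℝ, 0 < f.eval x) →
    ∃ p q : Polynomial ℝ, f = p ^ 2 + q ^ 2 ∧ 2 * p.natDegree ≤ f.natDegree ∧
      2 * q.natDegree ≤ f.natDegree := by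
  intro k
  induction k using Nat.strong_induction_on with
  | _ k ih =>
  intro f hk hpos
  by_cases h0 : f.natDegree = 0
  · obtain ⟨c, rfl⟩ := Polynomial.natDegree_eq_zero.mp h0
    have hc : 0 < c := by simpa using hpos 0
    refine ⟨C (Real.sqrt c), 0, ?_, by simp, by simp⟩
    rw [← C_pow, Real.sq_sqrt hc.le]
    simp
  · -- f has positive degree; find a complex root
    have hf0 : f ≠ 0 := fun h => by simpa [h] using hpos 0
    set φ := algebraMap ℝ ℂ with hφ
    have hFdeg : 0 < (f.map φ).degree := by
      rw [degree_map_eq_of_injective (algebraMap ℝ ℂ).injective]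
      exact natDegree_pos_iff_degree_pos.mp (Nat.pos_of_ne_zero h0)
    obtain ⟨z, hz⟩ := Complex.exists_root hFdeg
    have hzf : eval₂ φ z f = 0 := by rwa [← eval_map]
    have hzim : z.im ≠ 0 := by
      intro him
      have hzre : z = ((z.re : ℝ) : ℂ) := by
        apply Complex.ext <;> simp [him]
      rw [hzre] at hzf
      have h1 : φ (f.eval z.re) = 0 := by rwa [← eval₂_at_apply]
      simp only [hφ, Complex.coe_algebraMap, Complex.ofReal_eq_zero] at h1
      exact (hpos z.re).ne' h1
    set a := z.re with ha
    set b := z.im with hb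
    set Q : Polynomial ℝ := (X - C a) ^ 2 + C b ^ 2 with hQ
    have hCb : (C b ^ 2 : Polynomial ℝ).degree < ((X - C a) ^ 2 : Polynomial ℝ).degree := by
      rw [← C_pow]
      refine lt_of_le_of_lt degree_C_le ?_
      rw [degree_pow, degree_X_sub_C]
      decide
    have hQmonic : Q.Monic := (monic_X_sub_C a |>.pow 2).add_of_left hCb
    have hQdeg : Q.natDegree = 2 := by
      rw [hQ, natDegree_add_eq_left_of_degree_lt hCb, natDegree_pow, natDegree_X_sub_C]
    -- Q(z) = 0 over ℂ
    have hza : z - φ a = φ b * Complex.I := by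
      simp [hφ, Complex.ext_iff, ha, hb]
    have hQz : eval₂ φ z Q = 0 := by
      simp only [hQ, eval₂_add, eval₂_pow, eval₂_sub, eval₂_X, eval₂_C]
      rw [hza, mul_pow, Complex.I_sq]
      ring
    -- remainder of f by Q is 0
    set g := f /ₘ Q with hg
    set r := f %ₘ Q with hr
    have hfQ : r + Q * g = f := modByMonic_add_div f Q
    have hrdeg : r.degree ≤ 1 := by
      have h3 := degree_modByMonic_lt f hQmonic
      rw [← hr] at h3
      have h2 : Q.degree = 2 := by
        rw [degree_eq_natDegree hQmonic.ne_zero, hQdeg]; rfl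
      rw [h2] at h3
      exact Order.le_of_lt_succ (by exact_mod_cast h3)
    have hrform : r = C (r.coeff 1) * X + C (r.coeff 0) := eq_X_add_C_of_degree_le_one hrdeg
    have hrz : eval₂ φ z r = 0 := by
      have h4 := congrArg (eval₂ φ z) hfQ
      rw [eval₂_add, eval₂_mul, hQz, hzf] at h4
      simpa using h4
    have hr1 : r.coeff 1 = 0 := by
      rw [hrform] at hrz
      simp only [eval₂_add, eval₂_mul, eval₂_C, eval₂_X] at hrz
      have him := congrArg Complex.im hrz
      simp [hφ] at him
      rcases him with h | h
      · exact h
      · exact absurd h hzim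
    have hr0 : r.coeff 0 = 0 := by
      rw [hrform, hr1] at hrz
      simp only [eval₂_add, eval₂_mul, eval₂_C, eval₂_X, map_zero] at hrz
      have hre := congrArg Complex.re hrz
      simpa [hφ] using hre
    have hrzero : r = 0 := by rw [hrform, hr1, hr0]; simp
    have hfg : f = Q * g := by rw [← hfQ, hrzero, zero_add]
    -- g is positive
    have hQpos : ∀ x : ℝ, 0 < Q.eval x := by
      intro x
      simp only [hQ, eval_add, eval_pow, eval_sub, eval_X, eval_C]
      positivity
    have hgpos : ∀ x : ℝ, 0 < g.eval x := by
      intro x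
      have h5 : 0 < Q.eval x * g.eval x := by rw [← eval_mul, ← hfg]; exact hpos x
      nlinarith [hQpos x]
    have hg0 : g ≠ 0 := fun h => by simpa [h] using hgpos 0
    have hdegf : f.natDegree = g.natDegree + 2 := by
      rw [hfg, natDegree_mul hQmonic.ne_zero hg0, hQdeg]; ring
    have hglt : g.natDegree < k := by omega
    obtain ⟨p, s, hgps, hp, hs⟩ := ih g.natDegree hglt g le_rfl hgpos
    refine ⟨p * (X - C a) - s * C b, p * C b + s * (X - C a), ?_, ?_, ?_⟩
    · rw [hfg, hgps, hQ]
      ring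
    · have h6 : (p * (X - C a) - s * C b).natDegree ≤
          max (p.natDegree + 1) (s.natDegree + 0) := by
        refine le_trans (natDegree_sub_le _ _) ?_
        gcongr
        · exact le_trans (natDegree_mul_le) (by rw [natDegree_X_sub_C])
        · exact le_trans (natDegree_mul_le) (by simp)
      have := le_max_iff.mp h6
      omega
    · have h6 : (p * C b + s * (X - C a)).natDegree ≤
          max (p.natDegree + 0) (s.natDegree + 1) := by
        refine le_trans (natDegree_add_le _ _) ?_
        gcongr
        · exact le_trans (natDegree_mul_le) (by simp)
        · exact le_trans (natDegree_mul_le) (by rw [natDegree_X_sub_C])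
      have := le_max_iff.mp h6
      omega
open Polynomial Finset Matrix Filter

noncomputable def sigPoly (d : ℕ) : Polynomial ℝ := ∑ i ∈ Finset.range (d + 1), X ^ (2 * i)

lemma sigPoly_eval_pos (d : ℕ) (x : ℝ) : 0 < (sigPoly d).eval x := by
  rw [sigPoly, eval_finset_sum]
  have h1 : ∀ i ∈ Finset.range (d+1), 0 ≤ (X ^ (2*i) : Polynomial ℝ).eval x := by
    intro i _
    simp [eval_pow, pow_mul]
    positivity
  have h0 : (0:ℕ) ∈ Finset.range (d+1) := by simp
  calc (0:ℝ) < 1 := one_pos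
  _ = (X ^ (2*0) : Polynomial ℝ).eval x := by simp
  _ ≤ _ := Finset.single_le_sum h1 h0

lemma sigPoly_rest_deg (d : ℕ) :
    (∑ i ∈ Finset.range d, (X : Polynomial ℝ) ^ (2 * i)).degree < ((2*d : ℕ) : WithBot ℕ) := by
  refine lt_of_le_of_lt (degree_sum_le _ _) ?_
  rw [Finset.sup_lt_iff (by exact_mod_cast WithBot.bot_lt_coe _)]
  intro i hi
  rw [Finset.mem_range] at hi
  rw [degree_X_pow]
  exact_mod_cast (by omega : 2*i < 2*d)

lemma sigPoly_eq (d : ℕ) : sigPoly d = (∑ i ∈ Finset.range d, (X:Polynomial ℝ) ^ (2*i)) + X ^ (2*d) := by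
  rw [sigPoly, Finset.sum_range_succ]

lemma sigPoly_monic (d : ℕ) : (sigPoly d).Monic := by
  rw [sigPoly_eq]
  exact (monic_X_pow _).add_of_right (by rw [degree_X_pow]; exact sigPoly_rest_deg d)

lemma sigPoly_natDegree (d : ℕ) : (sigPoly d).natDegree = 2 * d := by
  rw [sigPoly_eq, natDegree_add_eq_right_of_degree_lt (by rw [degree_X_pow]; exact sigPoly_rest_deg d),
    natDegree_X_pow]

open Filter in
lemma exists_eps (d : ℕ) (f : Polynomial ℝ) (hdeg : f.natDegree = 2 * d)
    (hpos : ∀ x : ℝ, 0 < f.eval x) :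
    ∃ ε : ℝ, 0 < ε ∧ ∀ x : ℝ, 0 < (f - C ε * sigPoly d).eval x := by
  have hf0 : f ≠ 0 := fun h => by simpa [h] using hpos 0
  set σ := sigPoly d with hσ
  have hσ0 : σ ≠ 0 := (sigPoly_monic d).ne_zero
  have hσpos := sigPoly_eval_pos d
  have hdegeq : f.degree = σ.degree := by
    rw [degree_eq_natDegree hf0, degree_eq_natDegree hσ0, hdeg, hσ, sigPoly_natDegree]
  set h : ℝ → ℝ := fun x => f.eval x / σ.eval x with hh
  have hhpos : ∀ x, 0 < h x := fun x => div_pos (hpos x) (hσpos x)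
  have htop : Tendsto h atTop (nhds (f.leadingCoeff / σ.leadingCoeff)) :=
    div_tendsto_leadingCoeff_div_of_degree_eq f σ hdegeq
  set l := f.leadingCoeff / σ.leadingCoeff with hl
  have hl0 : 0 < l := by
    have h1 : 0 ≤ l := ge_of_tendsto' htop (fun x => (hhpos x).le)
    rcases h1.lt_or_eq with h2 | h2
    · exact h2
    · exact absurd h2.symm (div_ne_zero (leadingCoeff_ne_zero.mpr hf0) (leadingCoeff_ne_zero.mpr hσ0))
  -- behavior at -∞ via composition with -X
  set f' := f.comp (-X) with hf'
  have hf'eval : ∀ x : ℝ, f'.eval x = f.eval (-x) := by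
    intro x; rw [hf', eval_comp]; simp
  have hf'pos : ∀ x, 0 < f'.eval x := fun x => by rw [hf'eval]; exact hpos _
  have hf'0 : f' ≠ 0 := fun hE => by simpa [hE] using hf'pos 0
  have hσ'eval : ∀ x : ℝ, σ.eval (-x) = σ.eval x := by
    intro x
    rw [hσ, sigPoly, eval_finset_sum, eval_finset_sum]
    refine Finset.sum_congr rfl fun i _ => ?_
    simp [eval_pow, pow_mul]
  have hf'deg : f'.degree = σ.degree := by
    have h1 : f'.natDegree = 2 * d := by
      rw [hf', natDegree_comp]
      simp [hdeg]
    rw [degree_eq_natDegree hf'0, degree_eq_natDegree hσ0, h1, hσ, sigPoly_natDegree]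
  set h2 : ℝ → ℝ := fun x => f'.eval x / σ.eval x with hh2
  have hh2pos : ∀ x, 0 < h2 x := fun x => div_pos (hf'pos x) (hσpos x)
  have htop2 : Tendsto h2 atTop (nhds (f'.leadingCoeff / σ.leadingCoeff)) :=
    div_tendsto_leadingCoeff_div_of_degree_eq f' σ hf'deg
  set l2 := f'.leadingCoeff / σ.leadingCoeff with hl2
  have hl20 : 0 < l2 := by
    have h1 : 0 ≤ l2 := ge_of_tendsto' htop2 (fun x => (hh2pos x).le)
    rcases h1.lt_or_eq with h2' | h2'
    · exact h2'
    · exact absurd h2'.symm (div_ne_zero (leadingCoeff_ne_zero.mpr hf'0) (leadingCoeff_ne_zero.mpr hσ0))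
  obtain ⟨R, hR⟩ := eventually_atTop.mp (htop.eventually (eventually_gt_nhds (half_lt_self hl0)))
  obtain ⟨R2, hR2⟩ := eventually_atTop.mp (htop2.eventually (eventually_gt_nhds (half_lt_self hl20)))
  -- compact middle part
  have hcont : Continuous h := by
    apply Continuous.div (f.continuous_aeval) (σ.continuous_aeval)
    exact fun x => (hσpos x).ne'
  have hKc : IsCompact (Set.Icc (min (-R2) R) (max (-R2) R)) := isCompact_Icc
  obtain ⟨x₀, hx₀K, hx₀min⟩ := hKc.exists_isMinOn (Set.nonempty_Icc.mpr min_le_max)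
    hcont.continuousOn
  set m := h x₀ with hm
  set ε := min (min (l/2) (l2/2)) m with hε
  have hεpos : 0 < ε := by
    apply lt_min (lt_min (half_pos hl0) (half_pos hl20)) (hhpos x₀)
  have hlow : ∀ x : ℝ, ε ≤ h x := by
    intro x
    rcases le_or_gt R x with hx | hx
    · exact le_trans (min_le_left _ _) (le_trans (min_le_left _ _) (hR x hx).le)
    rcases le_or_gt x (-R2) with hx2 | hx2
    · have h3 := hR2 (-x) (by linarith)
      have h4 : h2 (-x) = h x := by
        show eval (-x) f' / eval (-x) σ = eval x f / eval x σ
        rw [hf'eval, hσ'eval, neg_neg]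
      rw [h4] at h3
      exact le_trans (min_le_left _ _) (le_trans (min_le_right _ _) h3.le)
    · have hxK : x ∈ Set.Icc (min (-R2) R) (max (-R2) R) :=
        ⟨le_trans (min_le_left _ _) hx2.le, le_trans hx.le (le_max_right _ _)⟩
      exact le_trans (min_le_right _ _) (hx₀min hxK)
  refine ⟨ε / 2, half_pos hεpos, fun x => ?_⟩
  have h5 : ε * σ.eval x ≤ f.eval x := by
    have := hlow x
    rw [hh] at this
    rw [le_div_iff₀ (hσpos x)] at this
    linarith
  have h6 := hσpos x
  simp only [eval_sub, eval_mul, eval_C]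
  nlinarith


noncomputable def gramPoly (m : ℕ) (Q : Matrix (Fin (m + 1)) (Fin (m + 1)) ℝ) : Polynomial ℝ :=
  ∑ i : Fin (m + 1), ∑ j : Fin (m + 1), C (Q i j) * X ^ ((i : ℕ) + (j : ℕ))


lemma gramPoly_add (m : ℕ) (Q R : Matrix (Fin (m+1)) (Fin (m+1)) ℝ) :
    gramPoly m (Q + R) = gramPoly m Q + gramPoly m R := by
  rw [gramPoly, gramPoly, gramPoly, ← Finset.sum_add_distrib]
  refine Finset.sum_congr rfl fun i _ => ?_
  rw [← Finset.sum_add_distrib]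
  refine Finset.sum_congr rfl fun j _ => ?_
  simp [Matrix.add_apply, add_mul]

lemma gramPoly_smul (m : ℕ) (a : ℝ) (Q : Matrix (Fin (m+1)) (Fin (m+1)) ℝ) :
    gramPoly m (a • Q) = C a * gramPoly m Q := by
  rw [gramPoly, gramPoly, Finset.mul_sum]
  refine Finset.sum_congr rfl fun i _ => ?_
  rw [Finset.mul_sum]
  refine Finset.sum_congr rfl fun j _ => ?_
  simp [Matrix.smul_apply, smul_eq_mul, mul_assoc]

lemma gramPoly_sub (m : ℕ) (Q R : Matrix (Fin (m+1)) (Fin (m+1)) ℝ) :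
    gramPoly m (Q - R) = gramPoly m Q - gramPoly m R := by
  have h := gramPoly_add m (Q - R) R
  rw [sub_add_cancel] at h
  rw [eq_sub_iff_add_eq]
  exact h.symm

lemma gramPoly_one (m : ℕ) : gramPoly m 1 = sigPoly m := by
  rw [gramPoly, sigPoly, ← Fin.sum_univ_eq_sum_range (fun i => (X:Polynomial ℝ) ^ (2*i))]
  refine Finset.sum_congr rfl fun i _ => ?_
  have h1 : ∀ j : Fin (m+1), C ((1 : Matrix (Fin (m+1)) (Fin (m+1)) ℝ) i j) * X ^ ((i:ℕ)+(j:ℕ))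
      = if i = j then X ^ ((i:ℕ)+(j:ℕ)) else 0 := by
    intro j
    by_cases h : i = j <;> simp [Matrix.one_apply, h]
  rw [Finset.sum_congr rfl (fun j _ => h1 j), Finset.sum_ite_eq]
  simp [two_mul]

lemma gramPoly_vecMulVec (m : ℕ) (v : Fin (m+1) → ℝ) :
    gramPoly m (Matrix.vecMulVec v v) = (∑ i : Fin (m+1), C (v i) * X ^ (i:ℕ)) ^ 2 := by
  rw [sq, Finset.sum_mul_sum, gramPoly]
  refine Finset.sum_congr rfl fun i _ => Finset.sum_congr rfl fun j _ => ?_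
  rw [Matrix.vecMulVec_apply, pow_add, C_mul]
  ring

lemma sum_coeff_eq_self (m : ℕ) (p : Polynomial ℝ) (hp : p.natDegree ≤ m) :
    (∑ i : Fin (m+1), C (p.coeff (i:ℕ)) * X ^ (i:ℕ)) = p := by
  rw [Fin.sum_univ_eq_sum_range (fun i => C (p.coeff i) * X ^ i)]
  conv_rhs => rw [p.as_sum_range' (m+1) (Nat.lt_succ_of_le hp)]
  exact Finset.sum_congr rfl fun i _ => C_mul_X_pow_eq_monomial

lemma vecMulVec_posSemidef (m : ℕ) (v : Fin (m+1) → ℝ) :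
    (Matrix.vecMulVec v v).PosSemidef := by
  rw [Matrix.posSemidef_iff_dotProduct_mulVec]
  constructor
  · ext i j
    simp [Matrix.conjTranspose_apply, Matrix.vecMulVec_apply, mul_comm]
  · intro x
    have h : (star x) ⬝ᵥ ((Matrix.vecMulVec v v).mulVec x) = (∑ i, v i * x i) ^ 2 := by
      simp only [star_trivial, dotProduct, Matrix.mulVec, Matrix.vecMulVec_apply]
      rw [sq, Finset.sum_mul_sum]
      refine Finset.sum_congr rfl fun i _ => ?_
      rw [Finset.mul_sum]
      exact Finset.sum_congr rfl fun j _ => by ring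
    rw [h]
    positivity

lemma posSemidef_smul {m : ℕ} (a : ℝ) (ha : 0 ≤ a) (Q : Matrix (Fin (m+1)) (Fin (m+1)) ℝ)
    (hQ : Q.PosSemidef) : (a • Q).PosSemidef := by
  rw [Matrix.posSemidef_iff_dotProduct_mulVec]
  constructor
  · ext i j
    have := congrFun (congrFun hQ.1 i) j
    simp only [Matrix.conjTranspose_apply, star_trivial, Matrix.smul_apply] at this ⊢
    rw [this]
  · intro x
    rw [Matrix.smul_mulVec, dotProduct_smul]
    exact mul_nonneg ha (hQ.dotProduct_mulVec_nonneg x)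

lemma posDef_smul_one {m : ℕ} (a : ℝ) (ha : 0 < a) :
    (a • (1 : Matrix (Fin (m+1)) (Fin (m+1)) ℝ)).PosDef := by
  have h : (a • (1 : Matrix (Fin (m+1)) (Fin (m+1)) ℝ)) = Matrix.diagonal (fun _ => a) := by
    ext i j
    by_cases h : i = j <;> simp [Matrix.one_apply, Matrix.diagonal_apply, h]
  rw [h]
  exact Matrix.posDef_diagonal_iff.mpr fun _ => ha

/-- positive-definite quadratic lower bound -/
lemma posDef_quad_lb {n : ℕ} (A : Matrix (Fin (n+1)) (Fin (n+1)) ℝ) (hA : A.PosDef) :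
    ∃ m : ℝ, 0 < m ∧ ∀ x : Fin (n+1) → ℝ, m * (∑ i, x i ^ 2) ≤ x ⬝ᵥ (A.mulVec x) := by
  set S : Set (Fin (n+1) → ℝ) := {x | ∑ i, x i ^ 2 = 1} with hS
  have hcont0 : Continuous (fun x : Fin (n+1) → ℝ => ∑ i, x i ^ 2) := by
    exact continuous_finset_sum _ fun i _ => (continuous_apply i).pow 2
  have hSclosed : IsClosed S := isClosed_eq hcont0 continuous_const
  have hSsub : S ⊆ Metric.closedBall 0 1 := by
    intro x hx
    rw [Metric.mem_closedBall, dist_zero_right]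
    rw [pi_norm_le_iff_of_nonneg zero_le_one]
    intro i
    rw [Real.norm_eq_abs, abs_le_one_iff_mul_self_le_one, ← sq]
    calc x i ^ 2 ≤ ∑ j, x j ^ 2 := Finset.single_le_sum (f := fun j => x j ^ 2) (fun j _ => sq_nonneg _) (mem_univ i)
    _ = 1 := hx
  have hScompact : IsCompact S :=
    (isCompact_closedBall 0 1).of_isClosed_subset hSclosed hSsub
  have hSne : S.Nonempty := by
    refine ⟨fun i => if i = 0 then 1 else 0, ?_⟩
    simp only [hS, Set.mem_setOf_eq]
    rw [Finset.sum_eq_single 0]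
    · simp
    · intro j _ hj; simp [hj]
    · simp
  set g : (Fin (n+1) → ℝ) → ℝ := fun x => x ⬝ᵥ A.mulVec x with hg
  have hgcont : Continuous g := by
    have : g = fun x => ∑ i, x i * ∑ j, A i j * x j := by
      funext x
      simp [hg, dotProduct, Matrix.mulVec]
    rw [this]
    refine continuous_finset_sum _ fun i _ => ?_
    exact (continuous_apply i).mul (continuous_finset_sum _ fun j _ =>
      continuous_const.mul (continuous_apply j))
  obtain ⟨x₀, hx₀S, hx₀min⟩ := hScompact.exists_isMinOn hSne hgcont.continuousOn
  refine ⟨g x₀, ?_, ?_⟩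
  · refine hA.dotProduct_mulVec_pos (x := x₀) ?_
    intro hx0
    rw [hS, Set.mem_setOf_eq, hx0] at hx₀S
    simp at hx₀S
  · intro x
    by_cases hx : x = 0
    · simp [hx, hg, Matrix.mulVec_zero]
    · have hs : 0 < ∑ i, x i ^ 2 := by
        obtain ⟨i, hi⟩ := Function.ne_iff.mp hx
        simp only [Pi.zero_apply] at hi
        refine Finset.sum_pos' (fun j _ => sq_nonneg _) ⟨i, Finset.mem_univ i, ?_⟩
        rw [← sq_abs]
        exact pow_pos (abs_pos.mpr hi) 2
      set c := Real.sqrt (∑ i, x i ^ 2) with hc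
      have hcpos : 0 < c := Real.sqrt_pos.mpr hs
      have hc2 : c ^ 2 = ∑ i, x i ^ 2 := Real.sq_sqrt hs.le
      have hyS : c⁻¹ • x ∈ S := by
        simp only [hS, Set.mem_setOf_eq, Pi.smul_apply, smul_eq_mul, mul_pow]
        rw [← Finset.mul_sum, ← hc2]
        field_simp
      have hgy : g (c⁻¹ • x) = c⁻¹ * c⁻¹ * g x := by
        simp only [hg, Matrix.mulVec_smul, dotProduct_smul,
          smul_dotProduct, smul_eq_mul]
        ring
      have hmin : g x₀ ≤ c⁻¹ * c⁻¹ * g x := by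
        have h3 := isMinOn_iff.mp hx₀min _ hyS
        rwa [hgy] at h3
      have h2 : g x₀ * c ^ 2 ≤ g x := by
        rw [sq]
        calc g x₀ * (c * c) ≤ (c⁻¹ * c⁻¹ * g x) * (c * c) := by
              apply mul_le_mul_of_nonneg_right hmin (by positivity)
        _ = g x := by field_simp
      calc g x₀ * (∑ i, x i ^ 2) = g x₀ * c ^ 2 := by rw [hc2]
      _ ≤ g x := h2

lemma perturb_psd {n : ℕ} (A B : Matrix (Fin (n+1)) (Fin (n+1)) ℝ) (hA : A.PosDef)
    (hB : ∀ i j, B i j = B j i) :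
    ∃ ε : ℝ, 0 < ε ∧ (A + ε • B).PosSemidef := by
  obtain ⟨m, hm, hlb⟩ := posDef_quad_lb A hA
  set c := ∑ i : Fin (n+1), ∑ j : Fin (n+1), |B i j| with hc
  have hc0 : 0 ≤ c := Finset.sum_nonneg fun i _ => Finset.sum_nonneg fun j _ => abs_nonneg _
  refine ⟨m / (c + 1), by positivity, ?_⟩
  rw [Matrix.posSemidef_iff_dotProduct_mulVec]
  constructor
  · -- hermitian
    ext i j
    simp only [Matrix.conjTranspose_apply, Matrix.add_apply, Matrix.smul_apply, star_trivial,
      smul_eq_mul]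
    rw [hB j i]
    have hAh := congrFun (congrFun hA.1 i) j
    simp only [Matrix.conjTranspose_apply, star_trivial] at hAh
    rw [hAh]
  · intro x
    simp only [star_trivial]
    rw [Matrix.add_mulVec, dotProduct_add, Matrix.smul_mulVec,
      dotProduct_smul, smul_eq_mul]
    set s := ∑ i, x i ^ 2 with hs
    have hs0 : 0 ≤ s := Finset.sum_nonneg fun i _ => sq_nonneg _
    have hBbound : |x ⬝ᵥ B.mulVec x| ≤ c * s := by
      have h1 : x ⬝ᵥ B.mulVec x = ∑ i, ∑ j, x i * (B i j * x j) := by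
        simp only [dotProduct, Matrix.mulVec]
        refine Finset.sum_congr rfl fun i _ => ?_
        rw [Finset.mul_sum]
      rw [h1, hc, Finset.sum_mul]
      refine le_trans (Finset.abs_sum_le_sum_abs _ _) (Finset.sum_le_sum fun i _ => ?_)
      rw [Finset.sum_mul]
      refine le_trans (Finset.abs_sum_le_sum_abs _ _) (Finset.sum_le_sum fun j _ => ?_)
      have hxi : x i ^ 2 ≤ s := Finset.single_le_sum (f := fun k => x k ^ 2)
        (fun k _ => sq_nonneg _) (Finset.mem_univ i)
      have hxj : x j ^ 2 ≤ s := Finset.single_le_sum (f := fun k => x k ^ 2)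
        (fun k _ => sq_nonneg _) (Finset.mem_univ j)
      have habs : |x i * (B i j * x j)| = |B i j| * (|x i| * |x j|) := by
        rw [abs_mul, abs_mul]; ring
      rw [habs]
      refine mul_le_mul_of_nonneg_left ?_ (abs_nonneg _)
      nlinarith [abs_nonneg (x i), abs_nonneg (x j), sq_abs (x i), sq_abs (x j)]
    have h2 := hlb x
    have h3 : -(c * s) ≤ x ⬝ᵥ B.mulVec x := neg_le_of_abs_le hBbound
    have h4 : m / (c + 1) * (c * s) ≤ m * s := by
      rw [div_mul_eq_mul_div, div_le_iff₀ (by linarith)]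
      nlinarith
    nlinarith [mul_le_mul_of_nonneg_left h3 (le_of_lt (by positivity : (0:ℝ) < m / (c+1)))]

abbrev IdxI (d : ℕ) := {p : Fin (d+1) × Fin (d+1) // (p.1 : ℕ) + 2 ≤ (p.2 : ℕ)}

def extC (d : ℕ) (c : IdxI d → ℝ) (p : Fin (d+1) × Fin (d+1)) : ℝ :=
  if h : (p.1 : ℕ) + 2 ≤ (p.2 : ℕ) then c ⟨p, h⟩ else 0

def Ssum (d : ℕ) (c : IdxI d → ℝ) (k : ℕ) : ℝ :=
  ∑ i : Fin (d+1), ∑ j : Fin (d+1),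
    if (i:ℕ) + (j:ℕ) = k ∧ (i:ℕ) + 2 ≤ (j:ℕ) then extC d c (i,j) else 0

def Tmat (d : ℕ) (c : IdxI d → ℝ) : Matrix (Fin (d+1)) (Fin (d+1)) ℝ := fun i j =>
  if (i:ℕ) + 2 ≤ (j:ℕ) then extC d c (i,j)
  else if (j:ℕ) + 2 ≤ (i:ℕ) then extC d c (j,i)
  else (if i = j then -2 else -1) * Ssum d c ((i:ℕ) + (j:ℕ))

def adSum (d : ℕ) (B : Matrix (Fin (d+1)) (Fin (d+1)) ℝ) (k : ℕ) : ℝ :=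
  ∑ i : Fin (d+1), ∑ j : Fin (d+1), if (i:ℕ) + (j:ℕ) = k then B i j else 0

def upSum (d : ℕ) (B : Matrix (Fin (d+1)) (Fin (d+1)) ℝ) (k : ℕ) : ℝ :=
  ∑ i : Fin (d+1), ∑ j : Fin (d+1),
    if (i:ℕ) + (j:ℕ) = k ∧ (i:ℕ) + 2 ≤ (j:ℕ) then B i j else 0

def nearSum (d : ℕ) (B : Matrix (Fin (d+1)) (Fin (d+1)) ℝ) (k : ℕ) : ℝ :=
  ∑ i : Fin (d+1), ∑ j : Fin (d+1),
    if (i:ℕ) + (j:ℕ) = k ∧ ¬((i:ℕ) + 2 ≤ (j:ℕ)) ∧ ¬((j:ℕ) + 2 ≤ (i:ℕ)) then B i j else 0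

lemma adSum_split (d : ℕ) (B : Matrix (Fin (d+1)) (Fin (d+1)) ℝ)
    (hsym : ∀ i j, B i j = B j i) (k : ℕ) :
    adSum d B k = 2 * upSum d B k + nearSum d B k := by
  have key : ∀ i j : Fin (d+1),
      (if (i:ℕ) + (j:ℕ) = k then B i j else 0) =
      ((if (i:ℕ) + (j:ℕ) = k ∧ (i:ℕ) + 2 ≤ (j:ℕ) then B i j else 0) +
       (if (i:ℕ) + (j:ℕ) = k ∧ (j:ℕ) + 2 ≤ (i:ℕ) then B i j else 0) +
       (if (i:ℕ) + (j:ℕ) = k ∧ ¬((i:ℕ) + 2 ≤ (j:ℕ)) ∧ ¬((j:ℕ) + 2 ≤ (i:ℕ)) then B i j else 0)) := by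
    intro i j
    by_cases h1 : (i:ℕ) + (j:ℕ) = k
    · by_cases h2 : (i:ℕ) + 2 ≤ (j:ℕ)
      · rw [if_pos h1, if_pos ⟨h1, h2⟩, if_neg (by omega), if_neg (by omega)]; ring
      · by_cases h3 : (j:ℕ) + 2 ≤ (i:ℕ)
        · rw [if_pos h1, if_neg (by omega), if_pos ⟨h1, h3⟩, if_neg (by omega)]; ring
        · rw [if_pos h1, if_neg (by omega), if_neg (by omega), if_pos ⟨h1, h2, h3⟩]; ring
    · rw [if_neg h1, if_neg (by omega), if_neg (by omega), if_neg (by omega)]; ring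
  have hlo : (∑ i : Fin (d+1), ∑ j : Fin (d+1),
      if (i:ℕ) + (j:ℕ) = k ∧ (j:ℕ) + 2 ≤ (i:ℕ) then B i j else 0) = upSum d B k := by
    rw [Finset.sum_comm]
    refine Finset.sum_congr rfl fun i _ => Finset.sum_congr rfl fun j _ => ?_
    rw [hsym j i]
    exact if_congr ⟨fun ⟨h1, h2⟩ => ⟨by omega, h2⟩, fun ⟨h1, h2⟩ => ⟨by omega, h2⟩⟩ rfl rfl
  calc adSum d B k
      = ∑ i : Fin (d+1), ∑ j : Fin (d+1),
        ((if (i:ℕ) + (j:ℕ) = k ∧ (i:ℕ) + 2 ≤ (j:ℕ) then B i j else 0) +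
         (if (i:ℕ) + (j:ℕ) = k ∧ (j:ℕ) + 2 ≤ (i:ℕ) then B i j else 0) +
         (if (i:ℕ) + (j:ℕ) = k ∧ ¬((i:ℕ) + 2 ≤ (j:ℕ)) ∧ ¬((j:ℕ) + 2 ≤ (i:ℕ)) then B i j else 0)) := by
        rw [adSum]
        exact Finset.sum_congr rfl fun i _ => Finset.sum_congr rfl fun j _ => key i j
    _ = 2 * upSum d B k + nearSum d B k := by
        simp only [Finset.sum_add_distrib]
        rw [hlo]
        rw [upSum, nearSum]
        ring

lemma nearSum_diag (d : ℕ) (B : Matrix (Fin (d+1)) (Fin (d+1)) ℝ) (i : Fin (d+1)) :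
    nearSum d B ((i:ℕ) + (i:ℕ)) = B i i := by
  rw [nearSum]
  rw [Finset.sum_eq_single_of_mem i (Finset.mem_univ i) ?h1]
  case h1 =>
    intro a _ ha
    refine Finset.sum_eq_zero fun b _ => ?_
    rw [if_neg]
    have := Fin.val_ne_of_ne ha
    omega
  rw [Finset.sum_eq_single_of_mem i (Finset.mem_univ i) ?h2]
  case h2 =>
    intro b _ hb
    rw [if_neg]
    have := Fin.val_ne_of_ne hb
    omega
  rw [if_pos ⟨rfl, by omega, by omega⟩]

lemma nearSum_off (d : ℕ) (B : Matrix (Fin (d+1)) (Fin (d+1)) ℝ) (i j : Fin (d+1))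
    (hij : (i:ℕ) + 1 = (j:ℕ)) :
    nearSum d B ((i:ℕ) + (j:ℕ)) = B i j + B j i := by
  have hne : i ≠ j := by intro h; rw [h] at hij; omega
  rw [nearSum]
  rw [Finset.sum_eq_add_of_mem i j (Finset.mem_univ i) (Finset.mem_univ j) hne ?h1]
  case h1 =>
    intro a _ ⟨hai, haj⟩
    refine Finset.sum_eq_zero fun b _ => ?_
    rw [if_neg]
    have h1 := Fin.val_ne_of_ne hai
    have h2 := Fin.val_ne_of_ne haj
    omega
  congr 1
  · rw [Finset.sum_eq_single_of_mem j (Finset.mem_univ j) ?h2]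
    case h2 =>
      intro b _ hb
      rw [if_neg]
      have := Fin.val_ne_of_ne hb
      omega
    rw [if_pos ⟨rfl, by omega, by omega⟩]
  · rw [Finset.sum_eq_single_of_mem i (Finset.mem_univ i) ?h3]
    case h3 =>
      intro b _ hb
      rw [if_neg]
      have := Fin.val_ne_of_ne hb
      omega
    rw [if_pos ⟨by omega, by omega, by omega⟩]

lemma nearSum_big (d : ℕ) (B : Matrix (Fin (d+1)) (Fin (d+1)) ℝ) (k : ℕ) (hk : 2*d < k) :
    nearSum d B k = 0 := by
  refine Finset.sum_eq_zero fun i _ => Finset.sum_eq_zero fun j _ => ?_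
  rw [if_neg]
  have hi := i.isLt
  have hj := j.isLt
  omega

lemma upSum_big (d : ℕ) (B : Matrix (Fin (d+1)) (Fin (d+1)) ℝ) (k : ℕ) (hk : 2*d < k) :
    upSum d B k = 0 := by
  refine Finset.sum_eq_zero fun i _ => Finset.sum_eq_zero fun j _ => ?_
  rw [if_neg]
  have hi := i.isLt
  have hj := j.isLt
  omega

lemma Ssum_big (d : ℕ) (c : IdxI d → ℝ) (k : ℕ) (hk : 2*d < k) : Ssum d c k = 0 := by
  refine Finset.sum_eq_zero fun i _ => Finset.sum_eq_zero fun j _ => ?_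
  rw [if_neg]
  have hi := i.isLt
  have hj := j.isLt
  omega

lemma Tmat_symm (d : ℕ) (c : IdxI d → ℝ) (i j : Fin (d+1)) :
    Tmat d c i j = Tmat d c j i := by
  rw [Tmat, Tmat]
  by_cases h1 : (i:ℕ) + 2 ≤ (j:ℕ)
  · rw [if_pos h1, if_neg (by omega), if_pos h1]
  by_cases h2 : (j:ℕ) + 2 ≤ (i:ℕ)
  · rw [if_neg h1, if_pos h2, if_pos h2]
  · rw [if_neg h1, if_neg h2, if_neg h2, if_neg h1]
    have h3 : (i:ℕ) + (j:ℕ) = (j:ℕ) + (i:ℕ) := by omega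
    rw [h3]
    congr 1
    exact if_congr eq_comm rfl rfl

lemma upSum_Tmat (d : ℕ) (c : IdxI d → ℝ) (k : ℕ) : upSum d (Tmat d c) k = Ssum d c k := by
  rw [upSum, Ssum]
  refine Finset.sum_congr rfl fun i _ => Finset.sum_congr rfl fun j _ => ?_
  by_cases h : (i:ℕ) + (j:ℕ) = k ∧ (i:ℕ) + 2 ≤ (j:ℕ)
  · rw [if_pos h, if_pos h, Tmat, if_pos h.2]
  · rw [if_neg h, if_neg h]

lemma adSum_Tmat (d : ℕ) (c : IdxI d → ℝ) (k : ℕ) : adSum d (Tmat d c) k = 0 := by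
  rw [adSum_split d _ (Tmat_symm d c) k, upSum_Tmat]
  by_cases hk : k ≤ 2*d
  · rcases Nat.even_or_odd k with ⟨m, hm⟩ | ⟨m, hm⟩
    · have hmd : m ≤ d := by omega
      set i₀ : Fin (d+1) := ⟨m, by omega⟩ with hi₀
      have hv1 : (i₀:ℕ) = m := rfl
      have h1 : (i₀:ℕ) + (i₀:ℕ) = k := by omega
      have h2 : nearSum d (Tmat d c) k = Tmat d c i₀ i₀ := by
        rw [← h1, nearSum_diag]
      rw [h2, Tmat, if_neg (by omega), if_neg (by omega), if_pos rfl, h1]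
      ring
    · have hmd : m < d := by omega
      set i₀ : Fin (d+1) := ⟨m, by omega⟩ with hi₀
      set j₀ : Fin (d+1) := ⟨m+1, by omega⟩ with hj₀
      have hv1 : (i₀:ℕ) = m := rfl
      have hv2 : (j₀:ℕ) = m + 1 := rfl
      have h1 : (i₀:ℕ) + (j₀:ℕ) = k := by omega
      have h2 : nearSum d (Tmat d c) k = Tmat d c i₀ j₀ + Tmat d c j₀ i₀ := by
        rw [← h1, nearSum_off d _ i₀ j₀ (by omega)]
      have hne : i₀ ≠ j₀ := by
        intro h
        have := congrArg Fin.val h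
        omega
      have hT1 : Tmat d c i₀ j₀ = -1 * Ssum d c k := by
        rw [Tmat, if_neg (by omega), if_neg (by omega), if_neg hne, h1]
      have hT2 : Tmat d c j₀ i₀ = -1 * Ssum d c k := by
        rw [Tmat, if_neg (by omega), if_neg (by omega), if_neg (Ne.symm hne),
          (show (j₀:ℕ) + (i₀:ℕ) = k by omega)]
      rw [h2, hT1, hT2]
      ring
  · rw [nearSum_big d _ k (by omega), Ssum_big d c k (by omega)]
    ring

lemma extC_add (d : ℕ) (c c' : IdxI d → ℝ) (p : Fin (d+1) × Fin (d+1)) :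
    extC d (c + c') p = extC d c p + extC d c' p := by
  rw [extC, extC, extC]
  split_ifs with h
  · rfl
  · ring

lemma extC_smul (d : ℕ) (a : ℝ) (c : IdxI d → ℝ) (p : Fin (d+1) × Fin (d+1)) :
    extC d (a • c) p = a * extC d c p := by
  rw [extC, extC]
  split_ifs with h
  · rfl
  · ring

lemma Ssum_add (d : ℕ) (c c' : IdxI d → ℝ) (k : ℕ) :
    Ssum d (c + c') k = Ssum d c k + Ssum d c' k := by
  rw [Ssum, Ssum, Ssum, ← Finset.sum_add_distrib]
  refine Finset.sum_congr rfl fun i _ => ?_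
  rw [← Finset.sum_add_distrib]
  refine Finset.sum_congr rfl fun j _ => ?_
  split_ifs with h
  · exact extC_add d c c' (i, j)
  · ring

lemma Ssum_smul (d : ℕ) (a : ℝ) (c : IdxI d → ℝ) (k : ℕ) :
    Ssum d (a • c) k = a * Ssum d c k := by
  rw [Ssum, Ssum, Finset.mul_sum]
  refine Finset.sum_congr rfl fun i _ => ?_
  rw [Finset.mul_sum]
  refine Finset.sum_congr rfl fun j _ => ?_
  split_ifs with h
  · exact extC_smul d a c (i, j)
  · ring

noncomputable def Tlin (d : ℕ) : (IdxI d → ℝ) →ₗ[ℝ] Matrix (Fin (d+1)) (Fin (d+1)) ℝ where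
  toFun := Tmat d
  map_add' c c' := by
    ext i j
    simp only [Matrix.add_apply, Tmat]
    split_ifs with h1 h2 h3
    · exact extC_add d c c' (i, j)
    · exact extC_add d c c' (j, i)
    · rw [Ssum_add]; ring
    · rw [Ssum_add]; ring
  map_smul' a c := by
    ext i j
    simp only [Matrix.smul_apply, RingHom.id_apply, smul_eq_mul, Tmat]
    split_ifs with h1 h2 h3
    · exact extC_smul d a c (i, j)
    · exact extC_smul d a c (j, i)
    · rw [Ssum_smul]; ring
    · rw [Ssum_smul]; ring

lemma Tlin_injective (d : ℕ) : Function.Injective (Tlin d) := by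
  rw [← LinearMap.ker_eq_bot]
  ext c
  simp only [LinearMap.mem_ker, Submodule.mem_bot]
  constructor
  · intro hc
    funext p
    obtain ⟨⟨i, j⟩, hp⟩ := p
    have h1 : Tmat d c i j = (0 : Matrix (Fin (d+1)) (Fin (d+1)) ℝ) i j :=
      congrFun (congrFun hc i) j
    simp only [Matrix.zero_apply] at h1
    simp only [Tmat] at h1
    rwa [if_pos hp, extC, dif_pos hp] at h1
  · intro hc
    rw [hc]
    exact map_zero _

lemma Tmat_surj_onto_K (d : ℕ) (B : Matrix (Fin (d+1)) (Fin (d+1)) ℝ)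
    (hsym : ∀ i j, B i j = B j i) (hzero : ∀ k, adSum d B k = 0) :
    ∃ c : IdxI d → ℝ, Tmat d c = B := by
  refine ⟨fun p => B p.1.1 p.1.2, ?_⟩
  set c : IdxI d → ℝ := fun p => B p.1.1 p.1.2 with hc
  have hext : ∀ i j : Fin (d+1), extC d c (i, j) =
      if (i:ℕ) + 2 ≤ (j:ℕ) then B i j else 0 := by
    intro i j
    rw [extC]
    split_ifs with h
    · rfl
    · rfl
  have hS : ∀ k, Ssum d c k = upSum d B k := by
    intro k
    rw [Ssum, upSum]
    refine Finset.sum_congr rfl fun i _ => Finset.sum_congr rfl fun j _ => ?_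
    by_cases h : (i:ℕ) + (j:ℕ) = k ∧ (i:ℕ) + 2 ≤ (j:ℕ)
    · rw [if_pos h, if_pos h, hext, if_pos h.2]
    · rw [if_neg h, if_neg h]
  have hkey : ∀ k, 2 * upSum d B k + nearSum d B k = 0 := by
    intro k
    rw [← adSum_split d B hsym k]
    exact hzero k
  have hdiag : ∀ i : Fin (d+1), B i i = -2 * upSum d B ((i:ℕ) + (i:ℕ)) := by
    intro i
    have h1 := hkey ((i:ℕ) + (i:ℕ))
    rw [nearSum_diag] at h1
    linarith
  have hoff : ∀ i j : Fin (d+1), (i:ℕ) + 1 = (j:ℕ) → B i j = -upSum d B ((i:ℕ) + (j:ℕ)) := by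
    intro i j hij
    have h1 := hkey ((i:ℕ) + (j:ℕ))
    rw [nearSum_off d B i j hij] at h1
    rw [hsym j i] at h1
    linarith
  funext i j
  rw [Tmat]
  split_ifs with h1 h2 h3
  · rw [hext, if_pos h1]
  · rw [hext, if_pos h2]
    exact (hsym i j).symm
  · -- i = j
    subst h3
    rw [hS, hdiag i]
  · -- near, i ≠ j
    have hij : (i:ℕ) + 1 = (j:ℕ) ∨ (j:ℕ) + 1 = (i:ℕ) := by
      have := Fin.val_ne_of_ne h3
      omega
    rcases hij with h | h
    · rw [hS, hoff i j h]
      ring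
    · rw [hS, (show (i:ℕ) + (j:ℕ) = (j:ℕ) + (i:ℕ) by omega), hsym i j, hoff j i h]
      ring

lemma gramPoly_coeff (d : ℕ) (B : Matrix (Fin (d+1)) (Fin (d+1)) ℝ) (k : ℕ) :
    (gramPoly d B).coeff k = adSum d B k := by
  rw [gramPoly, adSum, finset_sum_coeff]
  refine Finset.sum_congr rfl fun i _ => ?_
  rw [finset_sum_coeff]
  refine Finset.sum_congr rfl fun j _ => ?_
  rw [coeff_C_mul, coeff_X_pow]
  by_cases h : (i:ℕ) + (j:ℕ) = k
  · rw [if_pos h.symm, if_pos h, mul_one]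
  · rw [if_neg (fun hh => h hh.symm), if_neg h, mul_zero]

lemma gramPoly_eq_zero_iff (d : ℕ) (B : Matrix (Fin (d+1)) (Fin (d+1)) ℝ) :
    gramPoly d B = 0 ↔ ∀ k, adSum d B k = 0 := by
  constructor
  · intro h k
    rw [← gramPoly_coeff, h, coeff_zero]
  · intro h
    ext k
    rw [gramPoly_coeff, h k, coeff_zero]

def idxEquiv (d : ℕ) : IdxI d ≃ (Σ j : Fin (d+1), Fin ((j:ℕ) - 1)) where
  toFun p := ⟨p.1.2, ⟨(p.1.1 : ℕ), by have := p.2; omega⟩⟩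
  invFun q := ⟨(⟨(q.2 : ℕ), by have h1 := q.2.isLt; have h2 := q.1.isLt; omega⟩, q.1),
    by have h1 := q.2.isLt; simp; omega⟩
  left_inv p := by
    obtain ⟨⟨i, j⟩, hp⟩ := p
    rfl
  right_inv q := by
    obtain ⟨j, i⟩ := q
    rfl

lemma sum_range_pred : ∀ d : ℕ, ∑ j ∈ Finset.range (d+1), (j-1) = d.choose 2 := by
  intro d
  induction d with
  | zero => simp
  | succ n ihn =>
    rw [Finset.sum_range_succ, ihn]
    have h2 : (n+1).choose 2 = n.choose 1 + n.choose 2 := Nat.choose_succ_succ n 1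
    rw [Nat.choose_one_right] at h2
    omega

lemma card_idx (d : ℕ) : Fintype.card (IdxI d) = d.choose 2 := by
  rw [Fintype.card_congr (idxEquiv d), Fintype.card_sigma]
  have h1 : ∀ j : Fin (d+1), Fintype.card (Fin ((j:ℕ) - 1)) = (j:ℕ) - 1 := fun j =>
    Fintype.card_fin _
  rw [Finset.sum_congr rfl fun j _ => h1 j]
  rw [Fin.sum_univ_eq_sum_range (fun j => j - 1)]
  exact sum_range_pred d

/-- The Gram spectrahedron of a univariate real polynomial `g` of degree at most `2m`:
the set of positive semidefinite real symmetric `(m+1) × (m+1)` matrices `Q` with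
`g = Xᵀ Q X`, where `X = (1, x, …, x^m)ᵀ`. -/
def GramS (m : ℕ) (g : Polynomial ℝ) : Set (Matrix (Fin (m + 1)) (Fin (m + 1)) ℝ) :=
  {Q | Q.PosSemidef ∧
    g = ∑ i : Fin (m + 1), ∑ j : Fin (m + 1), C (Q i j) * X ^ ((i : ℕ) + (j : ℕ))}

/-- For a univariate real polynomial `f` of degree `2d` that is strictly positive
on `ℝ`, the Gram spectrahedron of `f` is convex and its affine span has dimension
`C(d, 2) = d(d−1)/2`. -/
theorem stmt_5 (d : ℕ) (f : Polynomial ℝ) (hdeg : f.natDegree = 2 * d)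
    (hpos : ∀ x : ℝ, 0 < f.eval x) :
    Convex ℝ (GramS d f) ∧
    Module.finrank ℝ (affineSpan ℝ (GramS d f)).direction = d.choose 2 := by
  have hGram : ∀ Q, Q ∈ GramS d f ↔ (Q.PosSemidef ∧ f = gramPoly d Q) := fun Q => Iff.rfl
  -- convexity
  have hconv : Convex ℝ (GramS d f) := by
    intro Q hQ R hR a b ha hb hab
    rw [hGram] at hQ hR ⊢
    constructor
    · exact (posSemidef_smul a ha Q hQ.1).add (posSemidef_smul b hb R hR.1)
    · rw [gramPoly_add, gramPoly_smul, gramPoly_smul, ← hQ.2, ← hR.2]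
      have hC : C a + C b = 1 := by rw [← C_add, hab, C_1]
      calc f = (C a + C b) * f := by rw [hC, one_mul]
      _ = C a * f + C b * f := by ring
  -- a positive definite Gram matrix
  obtain ⟨ε, hε, hgpos⟩ := exists_eps d f hdeg hpos
  set g := f - C ε * sigPoly d with hgdef
  have hgdeg : g.natDegree ≤ 2 * d := by
    refine le_trans (natDegree_sub_le _ _) ?_
    exact max_le (le_of_eq hdeg)
      (le_trans (natDegree_C_mul_le _ _) (le_of_eq (sigPoly_natDegree d)))
  obtain ⟨p, q, hpq, hpdeg, hqdeg⟩ := exists_sos (2*d) g hgdeg hgpos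
  have hp : p.natDegree ≤ d := by omega
  have hq : q.natDegree ≤ d := by omega
  set vp : Fin (d+1) → ℝ := fun i => p.coeff (i:ℕ) with hvp
  set vq : Fin (d+1) → ℝ := fun i => q.coeff (i:ℕ) with hvq
  set Q₀ : Matrix (Fin (d+1)) (Fin (d+1)) ℝ :=
    ε • 1 + (Matrix.vecMulVec vp vp + Matrix.vecMulVec vq vq) with hQ₀def
  have hQ₀pd : Q₀.PosDef :=
    (posDef_smul_one ε hε).add_posSemidef
      ((vecMulVec_posSemidef d vp).add (vecMulVec_posSemidef d vq))
  have hgram₀ : gramPoly d Q₀ = f := by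
    rw [hQ₀def, gramPoly_add, gramPoly_add, gramPoly_smul, gramPoly_one,
      gramPoly_vecMulVec, gramPoly_vecMulVec]
    have h1 : (∑ i : Fin (d+1), C (vp i) * X ^ (i:ℕ)) = p := sum_coeff_eq_self d p hp
    have h2 : (∑ i : Fin (d+1), C (vq i) * X ^ (i:ℕ)) = q := sum_coeff_eq_self d q hq
    rw [h1, h2, ← hpq, hgdef]
    ring
  have hQ₀mem : Q₀ ∈ GramS d f := (hGram Q₀).mpr ⟨hQ₀pd.posSemidef, hgram₀.symm⟩
  -- the kernel submodule
  set Ksub := LinearMap.range (Tlin d) with hKdef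
  have hmemK : ∀ B, B ∈ Ksub ↔ ((∀ i j, B i j = B j i) ∧ gramPoly d B = 0) := by
    intro B
    constructor
    · rintro ⟨c, rfl⟩
      exact ⟨Tmat_symm d c, (gramPoly_eq_zero_iff d _).mpr (adSum_Tmat d c)⟩
    · rintro ⟨hsym, hz⟩
      obtain ⟨c, hc⟩ := Tmat_surj_onto_K d B hsym ((gramPoly_eq_zero_iff d B).mp hz)
      exact ⟨c, hc⟩
  have hsymm_of_psd : ∀ Q : Matrix (Fin (d+1)) (Fin (d+1)) ℝ, Q.PosSemidef →
      ∀ i j, Q i j = Q j i := by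
    intro Q hQ i j
    have h1 := congrFun (congrFun hQ.1 j) i
    simp only [Matrix.conjTranspose_apply, star_trivial] at h1
    exact h1
  have hspan : vectorSpan ℝ (GramS d f) = Ksub := by
    apply le_antisymm
    · rw [vectorSpan_def, Submodule.span_le]
      intro B hB
      rw [Set.mem_vsub] at hB
      obtain ⟨Q, hQ, R, hR, rfl⟩ := hB
      rw [hGram] at hQ hR
      rw [SetLike.mem_coe, hmemK]
      constructor
      · intro i j
        have hQs := hsymm_of_psd Q hQ.1 i j
        have hRs := hsymm_of_psd R hR.1 i j
        simp only [vsub_eq_sub, Matrix.sub_apply, hQs, hRs]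
      · show gramPoly d (Q - R) = 0
        rw [gramPoly_sub, ← hQ.2, ← hR.2, sub_self]
    · intro B hB
      rw [hmemK] at hB
      obtain ⟨hsym, hz⟩ := hB
      obtain ⟨δ, hδ, hpsd⟩ := perturb_psd Q₀ B hQ₀pd hsym
      have hmem2 : Q₀ + δ • B ∈ GramS d f := by
        rw [hGram]
        refine ⟨hpsd, ?_⟩
        rw [gramPoly_add, gramPoly_smul, hz, hgram₀]
        simp
      have h3 : (Q₀ + δ • B) -ᵥ Q₀ ∈ vectorSpan ℝ (GramS d f) :=
        vsub_mem_vectorSpan ℝ hmem2 hQ₀mem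
      have h4 : (Q₀ + δ • B) -ᵥ Q₀ = δ • B := by
        simp [vsub_eq_sub]
      rw [h4] at h3
      have h5 := Submodule.smul_mem _ δ⁻¹ h3
      rwa [smul_smul, inv_mul_cancel₀ hδ.ne', one_smul] at h5
  refine ⟨hconv, ?_⟩
  rw [direction_affineSpan, hspan, hKdef,
    LinearMap.finrank_range_of_inj (Tlin_injective d), Module.finrank_pi, card_idx]
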